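/- Let (G, +, ν) be a complete abelian normed group, b ∈ G, (b_j)_{j≥1} a pseudo-decomposition of b, and for each j let (b_{j,i})_{i≥1} be a pseudo-decomposition of b_j. Then, for any bijection r ↦ (j(r), i(r)) from ℕ to ℕ×ℕ, the sequence a_r := b_{j(r), i(r)} is a pseudo-decomposition of b. -/
import Mathlib


open Filter Topology

/-- A sequence `a` is a pseudo-decomposition of `b`: `b = ∑ a j` with
`ν(b) = ∑ ν(a j)`. -/
def IsPseudoDecomp {G : Type*} [NormedAddCommGroup G] (a : ℕ → G) (b : G) : Prop :=
  HasSum a b ∧ HasSum (fun j => ‖a j‖) ‖b‖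

theorem pseudoDecomp_iterate {G : Type*} [NormedAddCommGroup G] [CompleteSpace G]
    (b : G) (c₀ : ℕ → G) (hb : IsPseudoDecomp c₀ b)
    (c : ℕ → ℕ → G) (hc : ∀ j, IsPseudoDecomp (c j) (c₀ j))
    (e : ℕ ≃ ℕ × ℕ) :
    IsPseudoDecomp (fun r => c (e r).1 (e r).2) b := by
  set F : ℕ × ℕ → ℝ := fun p => ‖c p.1 p.2‖ with hF
  have hFs : Summable F := by
    rw [summable_prod_of_nonneg (fun p => norm_nonneg _)]
    refine ⟨fun j => (hc j).2.summable, ?_⟩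
    have : (fun j => ∑' i, ‖c j i‖) = fun j => ‖c₀ j‖ := by
      funext j; exact (hc j).2.tsum_eq
    rw [this]
    exact hb.2.summable
  -- sum of norms over ℕ×ℕ is ‖b‖
  have hFsum : HasSum F ‖b‖ := by
    obtain ⟨s, hs⟩ := hFs
    have h1 : HasSum (fun j => ‖c₀ j‖) s :=
      hs.prod_fiberwise (fun j => (hc j).2)
    rwa [h1.unique hb.2] at hs
  have hGs : Summable fun p : ℕ × ℕ => c p.1 p.2 :=
    Summable.of_norm hFs
  have hGsum : HasSum (fun p : ℕ × ℕ => c p.1 p.2) b := by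
    obtain ⟨s, hs⟩ := hGs
    have h1 : HasSum c₀ s := hs.prod_fiberwise (fun j => (hc j).1)
    rwa [h1.unique hb.1] at hs
  constructor
  · exact (e.hasSum_iff.mpr hGsum)
  · exact (e.hasSum_iff.mpr hFsum)
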